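/- The Tutte polynomial M ↦ T_M(x,y) ∈ Z[x,y] is a valuation under matroid subdivisions: T_M(x,y) = Σ_i T_{M_i}(x,y) − Σ_{i<j} T_{M_{ij}}(x,y) + ⋯ for any matroid subdivision {M_1,...,M_m} of M. -/

import Mathlib

open Finset
open scoped Pointwise

/-- The indicator vector `e_B ∈ ℝⁿ` of a subset `B ⊆ [n]`. -/
def indVec (n : ℕ) (B : Finset (Fin n)) : Fin n → ℝ := fun i => if i ∈ B then 1 else 0

/-- A collection of subsets of `[n]` is the collection of bases of a matroid
(possibly the empty matroid) iff it satisfies the basis exchange axiom. -/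
def IsBases {n : ℕ} (𝓑 : Finset (Finset (Fin n))) : Prop :=
  ∀ B₁ ∈ 𝓑, ∀ B₂ ∈ 𝓑, ∀ b₁ ∈ B₁ \ B₂, ∃ b₂ ∈ B₂ \ B₁, insert b₂ (B₁.erase b₁) ∈ 𝓑

/-- The matroid (basis) polytope: convex hull of indicator vectors of the bases. -/
def polytope {n : ℕ} (𝓑 : Finset (Finset (Fin n))) : Set (Fin n → ℝ) :=
  convexHull ℝ (indVec n '' ↑𝓑)

/-- The rank of a subset `A` in the matroid with bases `𝓑`:
the maximal size of an intersection of `A` with a basis. -/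
def mrank {n : ℕ} (𝓑 : Finset (Finset (Fin n))) (A : Finset (Fin n)) : ℕ :=
  𝓑.sup fun B => (A ∩ B).card

/-- A subdivision of a polytope `P` into polytopes `Ps i`: their union is `P`,
their vertices are vertices of `P`, and each pairwise intersection is a proper
(exposed) face of both pieces. -/
def IsSubdivision {n m : ℕ} (P : Set (Fin n → ℝ)) (Ps : Fin m → Set (Fin n → ℝ)) : Prop :=
  (⋃ i, Ps i) = P ∧
  (∀ i, Set.extremePoints ℝ (Ps i) ⊆ Set.extremePoints ℝ P) ∧
  ∀ i j, i ≠ j →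
    IsExposed ℝ (Ps i) (Ps i ∩ Ps j) ∧ IsExposed ℝ (Ps j) (Ps i ∩ Ps j) ∧
    Ps i ∩ Ps j ≠ Ps i ∧ Ps i ∩ Ps j ≠ Ps j

/-- A matroid subdivision of the matroid `𝓑` into the matroids `𝓜 i`. -/
def IsMatroidSubdivision {n m : ℕ} (𝓑 : Finset (Finset (Fin n)))
    (𝓜 : Fin m → Finset (Finset (Fin n))) : Prop :=
  IsBases 𝓑 ∧ (∀ i, IsBases (𝓜 i)) ∧ IsSubdivision (polytope 𝓑) fun i => polytope (𝓜 i)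

open Classical in
/-- For `A ⊆ [m]`, the matroid `M_A` whose polytope is `⋂_{a ∈ A} Q(M_a)`:
its bases are the bases of `M` whose indicator vector lies in every `Q(M_a)`, `a ∈ A`.
For `A = ∅` this is `M` itself. -/
noncomputable def interMatroid {n m : ℕ} (𝓑 : Finset (Finset (Fin n)))
    (𝓜 : Fin m → Finset (Finset (Fin n))) (A : Finset (Fin m)) : Finset (Finset (Fin n)) :=
  𝓑.filter fun B => ∀ a ∈ A, indVec n B ∈ polytope (𝓜 a)

/-- `f` is a valuation under matroid subdivisions:
`∑_{A ⊆ [m]} (-1)^{|A|} f(M_A) = 0` for every matroid subdivision. -/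
def IsValuation {n : ℕ} {G : Type*} [AddCommGroup G] (f : Finset (Finset (Fin n)) → G) : Prop :=
  ∀ (m : ℕ) (𝓑 : Finset (Finset (Fin n))) (𝓜 : Fin m → Finset (Finset (Fin n))),
    IsMatroidSubdivision 𝓑 𝓜 →
    ∑ A : Finset (Fin m), (-1 : ℤ) ^ A.card • f (interMatroid 𝓑 𝓜 A) = 0

/-- The Tutte polynomial `T_M(x,y) = ∑_{A ⊆ [n]} (x-1)^{r(M)-r(A)} (y-1)^{|A|-r(A)}`,
as a polynomial in two variables `X 0 = x`, `X 1 = y`, with `T_∅ = 0`. -/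
noncomputable def tutte {n : ℕ} (𝓑 : Finset (Finset (Fin n))) : MvPolynomial (Fin 2) ℤ :=
  if 𝓑 = ∅ then 0 else
    ∑ A : Finset (Fin n),
      (MvPolynomial.X 0 - 1) ^ (mrank 𝓑 Finset.univ - mrank 𝓑 A) *
        (MvPolynomial.X 1 - 1) ^ (A.card - mrank 𝓑 A)


namespace TutteAux

open scoped Pointwise


open Classical

variable {n m : ℕ}

lemma indVec_injective : Function.Injective (indVec n) := by
  intro B C h
  ext i
  have h1 := congrFun h i
  by_cases hB : i ∈ B <;> by_cases hC : i ∈ C <;>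
    simp [indVec, hB, hC] at h1 ⊢

def cube (n : ℕ) : Set (Fin n → ℝ) := Set.univ.pi fun _ => Set.Icc (0:ℝ) 1

lemma convex_cube : Convex ℝ (cube n) := convex_pi fun _ _ => convex_Icc 0 1

lemma indVec_mem_cube (B : Finset (Fin n)) : indVec n B ∈ cube n := by
  intro i _
  by_cases h : i ∈ B <;> simp [indVec, h]

lemma mem_cube {x : Fin n → ℝ} : x ∈ cube n ↔ ∀ i, 0 ≤ x i ∧ x i ≤ 1 := by
  constructor
  · intro h i; exact h i (Set.mem_univ i)
  · intro h i _; exact h i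


/-- any 0/1 vector belonging to a subset of the cube is an extreme point of it. -/
lemma mem_extremePoints_of_01 {A : Set (Fin n → ℝ)} (hA : A ⊆ cube n)
    {x : Fin n → ℝ} (hx : x ∈ A) (h01 : ∀ i, x i = 0 ∨ x i = 1) :
    x ∈ Set.extremePoints ℝ A := by
  refine ⟨hx, ?_⟩
  intro y hy z hz hseg
  obtain ⟨a, b, ha, hb, hab, hxyz⟩ := hseg
  have hy' := mem_cube.1 (hA hy)
  have hz' := mem_cube.1 (hA hz)
  have key : y = x ∧ z = x := by
    constructor <;> [skip; skip] <;>
    · funext i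
      have hcomb : a * y i + b * z i = x i := by
        have := congrFun hxyz i
        simpa [Pi.add_apply, Pi.smul_apply, smul_eq_mul] using this
      rcases h01 i with h0 | h1
      · rw [h0] at hcomb
        have := (hy' i).1; have := (hz' i).1
        first
          | nlinarith [(hy' i).1, (hz' i).1]
          | nlinarith [(hy' i).1, (hz' i).1]
      · rw [h1] at hcomb
        first
          | nlinarith [(hy' i).2, (hz' i).2]
          | nlinarith [(hy' i).2, (hz' i).2]
  exact key.1



variable {n : ℕ}

lemma card_eq_of_isBases {𝓑 : Finset (Finset (Fin n))} (hB : IsBases 𝓑) :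
    ∀ B₁ ∈ 𝓑, ∀ B₂ ∈ 𝓑, B₁.card = B₂.card := by
  have main : ∀ k : ℕ, ∀ B₁ ∈ 𝓑, ∀ B₂ ∈ 𝓑, (B₁ \ B₂).card = k → B₁.card = B₂.card := by
    intro k
    induction k using Nat.strong_induction_on with
    | _ k ih =>
      intro B₁ hB₁ B₂ hB₂ hk
      rcases Nat.eq_zero_or_pos k with rfl | hpos
      · -- B₁ ⊆ B₂
        have hsub : B₁ ⊆ B₂ := by
          rw [← sdiff_eq_empty_iff_subset]
          exact card_eq_zero.1 hk
        by_cases h2 : B₂ \ B₁ = ∅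
        · have : B₂ ⊆ B₁ := sdiff_eq_empty_iff_subset.1 h2
          exact congrArg card (Subset.antisymm hsub this)
        · obtain ⟨b, hb⟩ := nonempty_iff_ne_empty.2 h2
          obtain ⟨b', hb', -⟩ := hB B₂ hB₂ B₁ hB₁ b hb
          rw [← sdiff_eq_empty_iff_subset] at hsub
          rw [hsub] at hb'
          exact absurd hb' (notMem_empty b')
      · have hne : (B₁ \ B₂).Nonempty := card_pos.1 (hk ▸ hpos)
        obtain ⟨b₁, hb₁⟩ := hne
        obtain ⟨b₂, hb₂, hB₁'⟩ := hB B₁ hB₁ B₂ hB₂ b₁ hb₁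
        set B₁' := insert b₂ (B₁.erase b₁) with hB₁'def
        have hb₂B₁ : b₂ ∉ B₁ := (mem_sdiff.1 hb₂).2
        have hb₁B₁ : b₁ ∈ B₁ := (mem_sdiff.1 hb₁).1
        have hcard : B₁'.card = B₁.card := by
          rw [hB₁'def, card_insert_of_notMem (fun h => hb₂B₁ (mem_of_mem_erase h)),
            card_erase_of_mem hb₁B₁]
          have := card_pos.2 ⟨b₁, hb₁B₁⟩
          omega
        have hsub : B₁' \ B₂ ⊆ (B₁ \ B₂).erase b₁ := by
          intro x hx
          rw [mem_sdiff, hB₁'def, mem_insert] at hx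
          obtain ⟨hx1 | hx1, hx2⟩ := hx
          · exact absurd (hx1 ▸ (mem_sdiff.1 hb₂).1) hx2
          · exact mem_erase.2 ⟨ne_of_mem_erase hx1, mem_sdiff.2 ⟨mem_of_mem_erase hx1, hx2⟩⟩
        have hlt : (B₁' \ B₂).card < k := by
          calc (B₁' \ B₂).card ≤ ((B₁ \ B₂).erase b₁).card := card_le_card hsub
          _ < (B₁ \ B₂).card := by
              rw [card_erase_of_mem hb₁]; have := card_pos.2 ⟨b₁, hb₁⟩; omega
          _ = k := hk
        have := ih _ hlt B₁' hB₁' B₂ hB₂ rfl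
        omega
  intro B₁ h₁ B₂ h₂
  exact main _ B₁ h₁ B₂ h₂ rfl




open Classical in
/-- indicator of a proposition -/
noncomputable def ind (p : Prop) : ℤ := if p then 1 else 0

lemma ind_pos {p : Prop} (h : p) : ind p = 1 := by simp [ind, h]
lemma ind_neg {p : Prop} (h : ¬ p) : ind p = 0 := by simp [ind, h]
lemma ind_congr {p q : Prop} (h : p ↔ q) : ind p = ind q := by
  by_cases hp : p
  · rw [ind_pos hp, ind_pos (h.1 hp)]
  · rw [ind_neg hp, ind_neg (fun hq => hp (h.2 hq))]

lemma snoc_comb {N : ℕ} (x : Fin N → ℝ) {a b t₁ t₂ : ℝ} (hab : a + b = 1) :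
    (Fin.snoc x (a * t₁ + b * t₂) : Fin (N+1) → ℝ)
      = a • (Fin.snoc x t₁ : Fin (N+1) → ℝ) + b • (Fin.snoc x t₂ : Fin (N+1) → ℝ) := by
  funext i
  induction i using Fin.lastCases with
  | last => simp [Fin.snoc_last]
  | cast j =>
      simp only [Fin.snoc_castSucc, Pi.add_apply, Pi.smul_apply, smul_eq_mul]
      have : a * x j + b * x j = (a + b) * x j := by ring
      rw [this, hab, one_mul]

lemma continuous_snoc {N : ℕ} (x : Fin N → ℝ) :
    Continuous fun t : ℝ => (Fin.snoc x t : Fin (N+1) → ℝ) := by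
  apply continuous_pi
  intro i
  induction i using Fin.lastCases with
  | last => simpa [Fin.snoc_last] using continuous_id'
  | cast j => simpa [Fin.snoc_castSucc] using continuous_const (y := x j)

theorem euler : ∀ (N : ℕ) {ι : Type} [Fintype ι] (c : ι → ℤ) (K : ι → Set (Fin N → ℝ)),
    (∀ i, Convex ℝ (K i)) → (∀ i, IsCompact (K i)) →
    (∀ x, ∑ i, c i * ind (x ∈ K i) = 0) →
    ∑ i, c i * ind (K i).Nonempty = 0 := by
  intro N
  induction N with
  | zero =>
      intro ι _ c K hconv hcomp hpt
      have hx0 := hpt (fun i => i.elim0)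
      rw [Finset.sum_congr rfl (fun i _ => ?_)]
      · exact hx0
      congr 1
      apply ind_congr
      constructor
      · rintro ⟨y, hy⟩
        have hyx : y = fun j : Fin 0 => j.elim0 := Subsingleton.elim _ _
        rwa [hyx] at hy
      · intro h; exact ⟨_, h⟩
  | succ N ih =>
      intro ι _ c K hconv hcomp hpt
      classical
      set fiber : ι → (Fin N → ℝ) → Set ℝ :=
        fun i x => {t : ℝ | (Fin.snoc x t : Fin (N+1) → ℝ) ∈ K i} with hfiberdef
      have hinit_lin : IsLinearMap ℝ (fun y : Fin (N+1) → ℝ => Fin.init y) := by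
        constructor
        · intro u v; funext j; simp [Fin.init]
        · intro a u; funext j; simp [Fin.init]
      have hinit_cont : Continuous (fun y : Fin (N+1) → ℝ => Fin.init y) :=
        continuous_pi fun j => continuous_apply _
      set K' : ι → Set (Fin N → ℝ) := fun i => (fun y => Fin.init y) '' K i with hK'def
      have hK'conv : ∀ i, Convex ℝ (K' i) := fun i => (hconv i).is_linear_image hinit_lin
      have hK'comp : ∀ i, IsCompact (K' i) := fun i => (hcomp i).image hinit_cont
      have hfib_iff : ∀ i x, (fiber i x).Nonempty ↔ x ∈ K' i := by
        intro i x
        constructor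
        · rintro ⟨t, ht⟩
          exact ⟨Fin.snoc x t, ht, by simp [Fin.init_snoc]⟩
        · rintro ⟨y, hy, rfl⟩
          refine ⟨y (Fin.last N), ?_⟩
          show (Fin.snoc (Fin.init y) (y (Fin.last N)) : Fin (N+1) → ℝ) ∈ K i
          rw [Fin.snoc_init_self]
          exact hy
      have hfib_comp : ∀ i x, IsCompact (fiber i x) := by
        intro i x
        have hclosed : IsClosed (fiber i x) :=
          (hcomp i).isClosed.preimage (continuous_snoc x)
        have hsub : fiber i x ⊆ (fun y : Fin (N+1) → ℝ => y (Fin.last N)) '' K i := by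
          intro t ht
          exact ⟨Fin.snoc x t, ht, by simp⟩
        exact ((hcomp i).image (continuous_apply _)).of_isClosed_subset hclosed hsub
      have hfib_conv : ∀ i x, Convex ℝ (fiber i x) := by
        intro i x t₁ ht₁ t₂ ht₂ a b ha hb hab
        have := (hconv i) ht₁ ht₂ ha hb hab
        show (Fin.snoc x (a * t₁ + b * t₂) : Fin (N+1) → ℝ) ∈ K i
        rw [snoc_comb x hab]
        simpa [smul_eq_mul] using this
      have hpt' : ∀ x : Fin N → ℝ, ∑ i, c i * ind (x ∈ K' i) = 0 := by
        intro x
        set a : ι → ℝ := fun i => sInf (fiber i x) with hadef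
        set b : ι → ℝ := fun i => sSup (fiber i x) with hbdef
        have hIcc : ∀ i, (fiber i x).Nonempty → fiber i x = Set.Icc (a i) (b i) := by
          intro i hne
          apply Set.Subset.antisymm
          · intro t ht
            exact ⟨csInf_le (hfib_comp i x).bddBelow ht, le_csSup (hfib_comp i x).bddAbove ht⟩
          · exact ((hfib_conv i x).ordConnected).out
              ((hfib_comp i x).sInf_mem hne) ((hfib_comp i x).sSup_mem hne)
        set J : Finset ι := Finset.univ.filter (fun i => (fiber i x).Nonempty) with hJdef
        set F : Finset ℝ := J.image a with hFdef
        set jump : ι → ℝ → ℤ := fun i t =>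
          ind ((Fin.snoc x t : Fin (N+1) → ℝ) ∈ K i)
            - ind ((fiber i x).Nonempty ∧ a i < t ∧ t ≤ b i) with hjumpdef
        have claimA : ∀ t : ℝ, ∑ i, c i * jump i t = 0 := by
          intro t
          set G : Finset ℝ := (J.image a ∪ J.image b).filter (· < t) with hGdef
          set s : ℝ := if h : G.Nonempty then (G.max' h + t)/2 else t - 1 with hsdef
          have hst : s < t := by
            rw [hsdef]
            split
            · rename_i h
              have := (Finset.mem_filter.1 (G.max'_mem h)).2
              linarith
            · linarith
          have hgs : ∀ g ∈ G, g < s := by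
            intro g hg
            have h1 : G.Nonempty := ⟨g, hg⟩
            have h2 : g ≤ G.max' h1 := Finset.le_max' G g hg
            have h3 := (Finset.mem_filter.1 (G.max'_mem h1)).2
            rw [hsdef, dif_pos h1]
            linarith
          have key : ∀ i, ind ((fiber i x).Nonempty ∧ a i < t ∧ t ≤ b i)
              = ind ((Fin.snoc x s : Fin (N+1) → ℝ) ∈ K i) := by
            intro i
            have hmem : ((Fin.snoc x s : Fin (N+1) → ℝ) ∈ K i) ↔ s ∈ fiber i x := Iff.rfl
            by_cases hne : (fiber i x).Nonempty
            · have hicc := hIcc i hne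
              by_cases h1 : a i < t ∧ t ≤ b i
              · have hain : a i ∈ G := by
                  rw [hGdef]
                  refine Finset.mem_filter.2 ⟨Finset.mem_union_left _ ?_, h1.1⟩
                  exact Finset.mem_image_of_mem a (Finset.mem_filter.2 ⟨Finset.mem_univ i, hne⟩)
                have hsmem : s ∈ fiber i x := by
                  rw [hicc]
                  exact ⟨le_of_lt (hgs _ hain), le_trans (le_of_lt hst) h1.2⟩
                rw [ind_pos ⟨hne, h1⟩, ind_pos (hmem.2 hsmem)]
              · have hsnot : s ∉ fiber i x := by
                  rw [hicc]
                  push_neg at h1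
                  intro hs
                  obtain ⟨hs1, hs2⟩ := hs
                  by_cases h2 : a i < t
                  · have hbt : b i < t := h1 h2
                    have hbin : b i ∈ G := by
                      rw [hGdef]
                      refine Finset.mem_filter.2 ⟨Finset.mem_union_right _ ?_, hbt⟩
                      exact Finset.mem_image_of_mem b (Finset.mem_filter.2 ⟨Finset.mem_univ i, hne⟩)
                    exact absurd hs2 (not_le.2 (hgs _ hbin))
                  · push_neg at h2
                    linarith
                rw [ind_neg (fun h => h1 h.2), ind_neg (fun h => hsnot (hmem.1 h))]
            · have hsnot : s ∉ fiber i x := fun hs => hne ⟨s, hs⟩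
              rw [ind_neg (fun h => hne h.1), ind_neg (fun h => hsnot (hmem.1 h))]
          have hsplit : ∑ i, c i * jump i t
              = (∑ i, c i * ind ((Fin.snoc x t : Fin (N+1) → ℝ) ∈ K i))
                - (∑ i, c i * ind ((Fin.snoc x s : Fin (N+1) → ℝ) ∈ K i)) := by
            rw [← Finset.sum_sub_distrib]
            apply Finset.sum_congr rfl
            intro i _
            simp only [hjumpdef]
            rw [key i]
            ring
          rw [hsplit, hpt _, hpt _]
          ring
        have claimB : ∀ i, ∑ t ∈ F, jump i t = ind (fiber i x).Nonempty := by
          intro i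
          by_cases hne : (fiber i x).Nonempty
          · have hicc := hIcc i hne
            have hab : a i ≤ b i := by
              have h0 := hne
              rw [hicc] at h0
              exact Set.nonempty_Icc.1 h0
            have hjt : ∀ t, jump i t = if t = a i then 1 else 0 := by
              intro t
              simp only [hjumpdef]
              have hmem : ((Fin.snoc x t : Fin (N+1) → ℝ) ∈ K i) ↔ t ∈ fiber i x := Iff.rfl
              by_cases ht : t = a i
              · have h1 : t ∈ fiber i x := by rw [hicc]; exact ⟨ht.ge, ht.le.trans hab⟩
                rw [ind_pos (hmem.2 h1), ind_neg (fun h => by rw [ht] at h; exact lt_irrefl _ h.2.1), if_pos ht]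
                ring
              · by_cases htf : t ∈ fiber i x
                · have h2 : a i ≤ t ∧ t ≤ b i := by rwa [hicc] at htf
                  have h3 : a i < t := lt_of_le_of_ne h2.1 (Ne.symm ht)
                  rw [ind_pos (hmem.2 htf), ind_pos ⟨hne, h3, h2.2⟩, if_neg ht]
                  ring
                · have h4 : ¬ ((fiber i x).Nonempty ∧ a i < t ∧ t ≤ b i) := by
                    rintro ⟨-, h5, h6⟩
                    exact htf (by rw [hicc]; exact ⟨le_of_lt h5, h6⟩)
                  rw [ind_neg (fun h => htf (hmem.1 h)), ind_neg h4, if_neg ht]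
                  ring
            rw [Finset.sum_congr rfl (fun t _ => hjt t)]
            have hain : a i ∈ F := by
              rw [hFdef]
              exact Finset.mem_image_of_mem a (Finset.mem_filter.2 ⟨Finset.mem_univ i, hne⟩)
            rw [Finset.sum_ite_eq' F (a i) (fun _ => (1:ℤ)), if_pos hain, ind_pos hne]
          · have hjt : ∀ t, jump i t = 0 := by
              intro t
              simp only [hjumpdef]
              have h1 : ¬ ((Fin.snoc x t : Fin (N+1) → ℝ) ∈ K i) := fun h => hne ⟨t, h⟩
              rw [ind_neg h1, ind_neg (fun h => hne h.1)]
              ring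
            rw [Finset.sum_congr rfl (fun t _ => hjt t), ind_neg hne]
            simp
        have main : ∑ i, c i * ind (fiber i x).Nonempty = 0 := by
          have h1 : ∑ t ∈ F, ∑ i, c i * jump i t = 0 :=
            Finset.sum_eq_zero fun t _ => claimA t
          rw [Finset.sum_comm] at h1
          calc ∑ i, c i * ind (fiber i x).Nonempty
              = ∑ i, c i * (∑ t ∈ F, jump i t) := by
                apply Finset.sum_congr rfl; intro i _; rw [claimB i]
            _ = ∑ i, ∑ t ∈ F, c i * jump i t := by
                apply Finset.sum_congr rfl; intro i _; rw [Finset.mul_sum]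
            _ = 0 := h1
        calc ∑ i, c i * ind (x ∈ K' i)
            = ∑ i, c i * ind (fiber i x).Nonempty := by
              apply Finset.sum_congr rfl
              intro i _
              rw [ind_congr (hfib_iff i x)]
          _ = 0 := main
      have hfin := ih c K' hK'conv hK'comp hpt'
      calc ∑ i, c i * ind (K i).Nonempty
          = ∑ i, c i * ind (K' i).Nonempty := by
            apply Finset.sum_congr rfl
            intro i _
            rw [ind_congr (by rw [hK'def]; simp [Set.image_nonempty] : (K i).Nonempty ↔ (K' i).Nonempty)]
        _ = 0 := hfin


section Geometry

variable {n m : ℕ}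

lemma polytope_subset_cube (𝓒 : Finset (Finset (Fin n))) : polytope 𝓒 ⊆ cube n := by
  apply convexHull_min _ convex_cube
  rintro _ ⟨B, -, rfl⟩
  exact indVec_mem_cube B

lemma mem_polytope_self {𝓒 : Finset (Finset (Fin n))} {B : Finset (Fin n)} (hB : B ∈ 𝓒) :
    indVec n B ∈ polytope 𝓒 :=
  subset_convexHull ℝ _ (Set.mem_image_of_mem _ (by exact_mod_cast hB))

lemma extremePoints_polytope_subset (𝓒 : Finset (Finset (Fin n))) :
    Set.extremePoints ℝ (polytope 𝓒) ⊆ indVec n '' ↑𝓒 :=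
  extremePoints_convexHull_subset

lemma indVec_extreme {𝓒 : Finset (Finset (Fin n))} {B : Finset (Fin n)} (hB : B ∈ 𝓒) :
    indVec n B ∈ Set.extremePoints ℝ (polytope 𝓒) := by
  apply mem_extremePoints_of_01 (polytope_subset_cube 𝓒) (mem_polytope_self hB)
  intro i
  by_cases h : i ∈ B <;> simp [indVec, h]

variable {𝓑 : Finset (Finset (Fin n))} {𝓜 : Fin m → Finset (Finset (Fin n))}

/-- the intersection of the polytopes of the pieces indexed by `S` (with `Q ∅ = P`). -/
def QS (𝓑 : Finset (Finset (Fin n))) (𝓜 : Fin m → Finset (Finset (Fin n)))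
    (S : Finset (Fin m)) : Set (Fin n → ℝ) :=
  polytope 𝓑 ∩ ⋂ a ∈ S, polytope (𝓜 a)

lemma mem_QS {S : Finset (Fin m)} {x : Fin n → ℝ} :
    x ∈ QS 𝓑 𝓜 S ↔ x ∈ polytope 𝓑 ∧ ∀ a ∈ S, x ∈ polytope (𝓜 a) := by
  simp [QS, Set.mem_iInter]

lemma convex_QS (S : Finset (Fin m)) : Convex ℝ (QS 𝓑 𝓜 S) := by
  apply Convex.inter (convex_convexHull ℝ _)
  exact convex_iInter₂ fun a _ => convex_convexHull ℝ _

lemma compact_polytope (𝓒 : Finset (Finset (Fin n))) : IsCompact (polytope 𝓒) :=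
  Set.Finite.isCompact_convexHull (𝕜 := ℝ) ((Set.toFinite _).image _)

lemma compact_QS (S : Finset (Fin m)) : IsCompact (QS 𝓑 𝓜 S) := by
  apply (compact_polytope 𝓑).inter_right
  exact isClosed_biInter fun a _ => (compact_polytope (𝓜 a)).isClosed

section Subdiv

variable (hExt : ∀ i, Set.extremePoints ℝ (polytope (𝓜 i)) ⊆ Set.extremePoints ℝ (polytope 𝓑))

include hExt

lemma piece_subset : ∀ a, polytope (𝓜 a) ⊆ polytope 𝓑 := by
  intro a
  apply convexHull_min _ (convex_convexHull ℝ _)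
  rintro _ ⟨B, hB, rfl⟩
  exact extremePoints_subset (hExt a (indVec_extreme (by exact_mod_cast hB)))

lemma isExtreme_QS
    (hFace : ∀ i j, i ≠ j → IsExposed ℝ (polytope (𝓜 i)) (polytope (𝓜 i) ∩ polytope (𝓜 j)) ∧
      IsExposed ℝ (polytope (𝓜 j)) (polytope (𝓜 i) ∩ polytope (𝓜 j)) ∧
      polytope (𝓜 i) ∩ polytope (𝓜 j) ≠ polytope (𝓜 i) ∧
      polytope (𝓜 i) ∩ polytope (𝓜 j) ≠ polytope (𝓜 j))
    {S : Finset (Fin m)} {a₀ : Fin m} (ha₀ : a₀ ∈ S) :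
    IsExtreme ℝ (polytope (𝓜 a₀)) (QS 𝓑 𝓜 S) := by
  have hQeq : QS 𝓑 𝓜 S = ⋂ a ∈ S, (polytope (𝓜 a₀) ∩ polytope (𝓜 a)) := by
    ext x
    simp only [mem_QS, Set.mem_iInter, Set.mem_inter_iff]
    constructor
    · rintro ⟨hP, hall⟩
      exact fun a ha => ⟨hall a₀ ha₀, hall a ha⟩
    · intro h
      refine ⟨piece_subset hExt a₀ (h a₀ ha₀).1, fun a ha => (h a ha).2⟩
  rw [hQeq]
  haveI : Nonempty {a // a ∈ S} := ⟨⟨a₀, ha₀⟩⟩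
  have hsub : (⋂ a ∈ S, (polytope (𝓜 a₀) ∩ polytope (𝓜 a)))
      = ⋂ a : {a // a ∈ S}, (polytope (𝓜 a₀) ∩ polytope (𝓜 a.1)) := by
    ext x
    simp [Set.mem_iInter, Subtype.forall]
  rw [hsub]
  refine isExtreme_iInter ?_
  rintro ⟨a, ha'⟩
  by_cases h : a = a₀
  · subst h
    simpa using IsExtreme.rfl (𝕜 := ℝ) (A := polytope (𝓜 a))
  · exact ((hFace a₀ a (Ne.symm h)).1).isExtreme

lemma extremePoints_QS_subset_P (hFace : ∀ i j, i ≠ j →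
      IsExposed ℝ (polytope (𝓜 i)) (polytope (𝓜 i) ∩ polytope (𝓜 j)) ∧
      IsExposed ℝ (polytope (𝓜 j)) (polytope (𝓜 i) ∩ polytope (𝓜 j)) ∧
      polytope (𝓜 i) ∩ polytope (𝓜 j) ≠ polytope (𝓜 i) ∧
      polytope (𝓜 i) ∩ polytope (𝓜 j) ≠ polytope (𝓜 j))
    (S : Finset (Fin m)) :
    Set.extremePoints ℝ (QS 𝓑 𝓜 S) ⊆ indVec n '' ↑(interMatroid 𝓑 𝓜 S) := by
  intro z hz
  have hzP : z ∈ indVec n '' ↑𝓑 := by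
    rcases S.eq_empty_or_nonempty with rfl | ⟨a₀, ha₀⟩
    · apply extremePoints_polytope_subset 𝓑
      have : QS 𝓑 𝓜 (∅ : Finset (Fin m)) = polytope 𝓑 := by
        simp [QS]
      rwa [this] at hz
    · have h1 := (isExtreme_QS hExt hFace ha₀).extremePoints_subset_extremePoints hz
      exact extremePoints_polytope_subset 𝓑 (hExt a₀ h1)
  obtain ⟨B, hB, hBeq⟩ := hzP
  have hBmem : B ∈ 𝓑 := by exact_mod_cast hB
  have hzQS : z ∈ QS 𝓑 𝓜 S := extremePoints_subset hz
  refine ⟨B, ?_, hBeq⟩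
  have : B ∈ interMatroid 𝓑 𝓜 S := by
    rw [interMatroid, Finset.mem_filter]
    exact ⟨hBmem, fun a ha => by rw [hBeq]; exact (mem_QS.1 hzQS).2 a ha⟩
  exact_mod_cast this

end Subdiv

/-- the halfspace `{x : Σ_{i ∈ A} x i ≥ r}` -/
def HS (A : Finset (Fin n)) (r : ℕ) : Set (Fin n → ℝ) := {x | (r : ℝ) ≤ ∑ i ∈ A, x i}

lemma convex_HS (A : Finset (Fin n)) (r : ℕ) : Convex ℝ (HS A r) := by
  apply convex_halfSpace_ge
  constructor
  · intro u v; simp [Finset.sum_add_distrib]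
  · intro c u; simp [Finset.mul_sum]

lemma closed_HS (A : Finset (Fin n)) (r : ℕ) : IsClosed (HS A r) :=
  isClosed_le continuous_const (continuous_finset_sum _ fun i _ => continuous_apply i)

lemma sum_indVec (A B : Finset (Fin n)) : ∑ i ∈ A, indVec n B i = ((A ∩ B).card : ℝ) := by
  rw [show (∑ i ∈ A, indVec n B i) = ∑ i ∈ A, (if i ∈ B then (1:ℝ) else 0) from rfl,
    Finset.sum_ite_mem]
  simp

/-- the continuous linear functional `x ↦ Σ_{i ∈ A} x i` -/
noncomputable def lA (A : Finset (Fin n)) : (Fin n → ℝ) →L[ℝ] ℝ :=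
  ∑ i ∈ A, ContinuousLinearMap.proj i

lemma lA_apply (A : Finset (Fin n)) (x : Fin n → ℝ) : lA A x = ∑ i ∈ A, x i := by
  simp [lA]

lemma rank_iff (hExt : ∀ i, Set.extremePoints ℝ (polytope (𝓜 i)) ⊆
      Set.extremePoints ℝ (polytope 𝓑))
    (hFace : ∀ i j, i ≠ j →
      IsExposed ℝ (polytope (𝓜 i)) (polytope (𝓜 i) ∩ polytope (𝓜 j)) ∧
      IsExposed ℝ (polytope (𝓜 j)) (polytope (𝓜 i) ∩ polytope (𝓜 j)) ∧
      polytope (𝓜 i) ∩ polytope (𝓜 j) ≠ polytope (𝓜 i) ∧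
      polytope (𝓜 i) ∩ polytope (𝓜 j) ≠ polytope (𝓜 j))
    (S : Finset (Fin m)) (A : Finset (Fin n)) (r : ℕ) :
    (∃ B ∈ interMatroid 𝓑 𝓜 S, r ≤ (A ∩ B).card) ↔ (QS 𝓑 𝓜 S ∩ HS A r).Nonempty := by
  constructor
  · rintro ⟨B, hB, hrB⟩
    rw [interMatroid, Finset.mem_filter] at hB
    refine ⟨indVec n B, mem_QS.2 ⟨mem_polytope_self hB.1, hB.2⟩, ?_⟩
    show (r : ℝ) ≤ ∑ i ∈ A, indVec n B i
    rw [sum_indVec]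
    exact_mod_cast hrB
  · rintro ⟨x, hxQ, hxH⟩
    obtain ⟨z, hzQ, hzmax⟩ := (compact_QS S).exists_isMaxOn ⟨x, hxQ⟩
      ((lA A).continuous.continuousOn)
    set Fc : Set (Fin n → ℝ) := {y ∈ QS 𝓑 𝓜 S | ∀ w ∈ QS 𝓑 𝓜 S, lA A w ≤ lA A y} with hFcdef
    have hexp : IsExposed ℝ (QS 𝓑 𝓜 S) Fc := fun _ => ⟨lA A, rfl⟩
    have hFcne : Fc.Nonempty := ⟨z, hzQ, fun w hw => hzmax hw⟩
    obtain ⟨u, hu⟩ := (hexp.isCompact (compact_QS S)).extremePoints_nonempty hFcne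
    have hu' : u ∈ Set.extremePoints ℝ (QS 𝓑 𝓜 S) :=
      hexp.isExtreme.extremePoints_subset_extremePoints hu
    obtain ⟨B, hB, hBeq⟩ := extremePoints_QS_subset_P hExt hFace S hu'
    refine ⟨B, by exact_mod_cast hB, ?_⟩
    have h1 : lA A x ≤ lA A u := (extremePoints_subset hu).2 x hxQ
    have h2 : (r : ℝ) ≤ lA A u := le_trans (by rw [lA_apply]; exact hxH) h1
    rw [← hBeq, lA_apply, sum_indVec] at h2
    exact_mod_cast h2

lemma pointwise (hUnion : (⋃ i, polytope (𝓜 i)) = polytope 𝓑)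
    (hExt : ∀ i, Set.extremePoints ℝ (polytope (𝓜 i)) ⊆ Set.extremePoints ℝ (polytope 𝓑))
    (A : Finset (Fin n)) (r : ℕ) (x : Fin n → ℝ) :
    ∑ S : Finset (Fin m), (-1 : ℤ) ^ S.card * ind (x ∈ QS 𝓑 𝓜 S ∩ HS A r) = 0 := by
  classical
  by_cases hx : x ∈ polytope 𝓑 ∩ HS A r
  · set T : Finset (Fin m) := Finset.univ.filter (fun a => x ∈ polytope (𝓜 a)) with hTdef
    have hT : T.Nonempty := by
      have : x ∈ ⋃ i, polytope (𝓜 i) := hUnion ▸ hx.1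
      obtain ⟨a, ha⟩ := Set.mem_iUnion.1 this
      exact ⟨a, Finset.mem_filter.2 ⟨Finset.mem_univ a, ha⟩⟩
    have hiff : ∀ S : Finset (Fin m), (x ∈ QS 𝓑 𝓜 S ∩ HS A r) ↔ S ⊆ T := by
      intro S
      constructor
      · rintro ⟨hQ, -⟩
        intro a ha
        exact Finset.mem_filter.2 ⟨Finset.mem_univ a, (mem_QS.1 hQ).2 a ha⟩
      · intro hST
        refine ⟨mem_QS.2 ⟨hx.1, fun a ha => (Finset.mem_filter.1 (hST ha)).2⟩, hx.2⟩
    calc ∑ S : Finset (Fin m), (-1 : ℤ) ^ S.card * ind (x ∈ QS 𝓑 𝓜 S ∩ HS A r)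
        = ∑ S : Finset (Fin m), (if S ∈ T.powerset then (-1 : ℤ) ^ S.card else 0) := by
          apply Finset.sum_congr rfl
          intro S _
          rw [ind_congr (hiff S)]
          by_cases h : S ⊆ T
          · rw [ind_pos h, if_pos (Finset.mem_powerset.2 h), mul_one]
          · rw [ind_neg h, if_neg (fun hc => h (Finset.mem_powerset.1 hc)), mul_zero]
      _ = ∑ S ∈ T.powerset, (-1 : ℤ) ^ S.card := by
          rw [Finset.sum_ite_mem, Finset.univ_inter]
      _ = 0 := Finset.sum_powerset_neg_one_pow_card_of_nonempty hT
  · apply Finset.sum_eq_zero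
    intro S _
    rw [ind_neg, mul_zero]
    intro hc
    exact hx ⟨(mem_QS.1 hc.1).1, hc.2⟩

end Geometry

section Assembly

noncomputable def psi (d cardA k : ℕ) : MvPolynomial (Fin 2) ℤ :=
  (MvPolynomial.X 0 - 1) ^ (d - k) * (MvPolynomial.X 1 - 1) ^ (cardA - k)

noncomputable def del (d cardA : ℕ) : ℕ → MvPolynomial (Fin 2) ℤ
  | 0 => psi d cardA 0
  | (r+1) => psi d cardA (r+1) - psi d cardA r

lemma sum_del (d cardA k : ℕ) :
    ∑ r ∈ Finset.range (k+1), del d cardA r = psi d cardA k := by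
  induction k with
  | zero => simp [del]
  | succ k ih =>
      rw [Finset.sum_range_succ, ih]
      simp [del]

end Assembly

end TutteAux

open TutteAux in
/-- The Tutte polynomial is a valuation under matroid subdivisions. -/
theorem statement_18 (n : ℕ) :
    IsValuation fun 𝓑 : Finset (Finset (Fin n)) => tutte 𝓑 := by
  intro m 𝓑 𝓜 hsub
  classical
  obtain ⟨hB, hM, hUnion, hExt, hFace⟩ := hsub
  by_cases hBe : 𝓑 = ∅
  · subst hBe
    have h1 : ∀ S : Finset (Fin m), interMatroid (∅ : Finset (Finset (Fin n))) 𝓜 S = ∅ :=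
      fun S => Finset.filter_empty _
    have h2 : tutte (∅ : Finset (Finset (Fin n))) = 0 := by
      simp [tutte]
    calc ∑ S : Finset (Fin m), (-1:ℤ)^S.card •
            (fun 𝓑 : Finset (Finset (Fin n)) => tutte 𝓑) (interMatroid ∅ 𝓜 S)
        = ∑ S : Finset (Fin m), (-1:ℤ)^S.card • (0 : MvPolynomial (Fin 2) ℤ) :=
          Finset.sum_congr rfl (fun S _ => by simp only [h1 S, h2])
      _ = 0 := by simp
  · obtain ⟨B₀, hB₀⟩ := Finset.nonempty_iff_ne_empty.2 hBe
    have hcard : ∀ B ∈ 𝓑, B.card = B₀.card := fun B hB' => card_eq_of_isBases hB B hB' B₀ hB₀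
    set d : ℕ := mrank 𝓑 Finset.univ with hd
    have hdval : d = B₀.card := by
      rw [hd, mrank]
      apply le_antisymm
      · apply Finset.sup_le
        intro B hB'
        rw [Finset.univ_inter]
        exact (hcard B hB').le
      · calc B₀.card = (Finset.univ ∩ B₀).card := by rw [Finset.univ_inter]
          _ ≤ _ := Finset.le_sup (f := fun B => (Finset.univ ∩ B).card) hB₀
    have hMSrank_univ : ∀ S : Finset (Fin m), (interMatroid 𝓑 𝓜 S).Nonempty →
        mrank (interMatroid 𝓑 𝓜 S) Finset.univ = d := by
      rintro S ⟨B₁, hB₁⟩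
      have hsub' : interMatroid 𝓑 𝓜 S ⊆ 𝓑 := Finset.filter_subset _ _
      rw [mrank]
      apply le_antisymm
      · apply Finset.sup_le
        intro B hB'
        rw [Finset.univ_inter, hcard B (hsub' hB'), ← hdval]
      · have h2 : (Finset.univ ∩ B₁).card = d := by
          rw [Finset.univ_inter, hcard B₁ (hsub' hB₁), hdval]
        exact h2 ▸ Finset.le_sup (f := fun B => (Finset.univ ∩ B).card) hB₁
    have hrank_le : ∀ (S : Finset (Fin m)) (A : Finset (Fin n)),
        mrank (interMatroid 𝓑 𝓜 S) A ≤ A.card :=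
      fun S A => Finset.sup_le fun B _ => Finset.card_le_card Finset.inter_subset_left
    have key1 : ∀ S : Finset (Fin m),
        tutte (interMatroid 𝓑 𝓜 S) = ∑ A : Finset (Fin n), ∑ r ∈ Finset.range (A.card+1),
          ind ((QS 𝓑 𝓜 S ∩ HS A r).Nonempty) • del d A.card r := by
      intro S
      by_cases hne : interMatroid 𝓑 𝓜 S = ∅
      · rw [tutte, if_pos hne]
        symm
        apply Finset.sum_eq_zero
        intro A _
        apply Finset.sum_eq_zero
        intro r _
        rw [ind_neg, zero_smul]
        intro hc
        obtain ⟨B, hBmem, -⟩ := (rank_iff hExt hFace S A r).2 hc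
        rw [hne] at hBmem
        exact absurd hBmem (Finset.notMem_empty B)
      · have hne' : (interMatroid 𝓑 𝓜 S).Nonempty := Finset.nonempty_iff_ne_empty.2 hne
        rw [tutte, if_neg hne]
        apply Finset.sum_congr rfl
        intro A _
        set k := mrank (interMatroid 𝓑 𝓜 S) A with hk
        have hkA : k ≤ A.card := hrank_le S A
        have hind : ∀ r : ℕ, ind ((QS 𝓑 𝓜 S ∩ HS A r).Nonempty) = if r ≤ k then 1 else 0 := by
          intro r
          by_cases h : r ≤ k
          · rw [if_pos h, ind_pos]
            apply (rank_iff hExt hFace S A r).1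
            obtain ⟨B, hBm, hBs⟩ := Finset.exists_mem_eq_sup _ hne' (fun B => (A ∩ B).card)
            refine ⟨B, hBm, le_trans h ?_⟩
            rw [hk, mrank, hBs]
          · rw [if_neg h, ind_neg]
            intro hc
            obtain ⟨B, hBm, hrB⟩ := (rank_iff hExt hFace S A r).2 hc
            apply h
            calc r ≤ (A ∩ B).card := hrB
              _ ≤ k := by rw [hk, mrank]; exact Finset.le_sup (f := fun B => (A ∩ B).card) hBm
        have hstep1 : (MvPolynomial.X 0 - 1) ^ (mrank (interMatroid 𝓑 𝓜 S) Finset.univ - k) *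
            (MvPolynomial.X 1 - 1) ^ (A.card - k) = psi d A.card k := by
          rw [hMSrank_univ S hne']
          rfl
        rw [hstep1]
        symm
        calc ∑ r ∈ Finset.range (A.card+1), ind ((QS 𝓑 𝓜 S ∩ HS A r).Nonempty) • del d A.card r
            = ∑ r ∈ Finset.range (A.card+1), (if r ≤ k then (1:ℤ) else 0) • del d A.card r :=
              Finset.sum_congr rfl (fun r _ => by rw [hind r])
          _ = ∑ r ∈ Finset.range (k+1), (if r ≤ k then (1:ℤ) else 0) • del d A.card r :=
              (Finset.sum_subset (Finset.range_subset_range.2 (Nat.succ_le_succ hkA))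
                (fun r _ hnr => by
                  rw [if_neg (fun hle => hnr (Finset.mem_range.2 (Nat.lt_succ_of_le hle))),
                    zero_smul])).symm
          _ = ∑ r ∈ Finset.range (k+1), del d A.card r :=
              Finset.sum_congr rfl (fun r hr => by
                rw [if_pos (Nat.lt_succ_iff.1 (Finset.mem_range.1 hr)), one_smul])
          _ = psi d A.card k := sum_del d A.card k
    have heuler : ∀ (A : Finset (Fin n)) (r : ℕ),
        ∑ S : Finset (Fin m), (-1:ℤ)^S.card * ind ((QS 𝓑 𝓜 S ∩ HS A r).Nonempty) = 0 := by
      intro A r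
      apply euler n (fun S : Finset (Fin m) => (-1:ℤ)^S.card)
        (fun S => QS 𝓑 𝓜 S ∩ HS A r)
      · exact fun S => (convex_QS S).inter (convex_HS A r)
      · exact fun S => (compact_QS S).inter_right (closed_HS A r)
      · exact fun x => pointwise hUnion hExt A r x
    calc ∑ S : Finset (Fin m), (-1:ℤ)^S.card •
            (fun 𝓑 : Finset (Finset (Fin n)) => tutte 𝓑) (interMatroid 𝓑 𝓜 S)
        = ∑ S : Finset (Fin m), ∑ A : Finset (Fin n), ∑ r ∈ Finset.range (A.card+1),
            ((-1:ℤ)^S.card * ind ((QS 𝓑 𝓜 S ∩ HS A r).Nonempty)) • del d A.card r := by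
          apply Finset.sum_congr rfl
          intro S _
          simp only
          rw [key1 S, Finset.smul_sum]
          apply Finset.sum_congr rfl
          intro A _
          rw [Finset.smul_sum]
          apply Finset.sum_congr rfl
          intro r _
          rw [smul_smul]
      _ = ∑ A : Finset (Fin n), ∑ r ∈ Finset.range (A.card+1),
            (∑ S : Finset (Fin m), (-1:ℤ)^S.card * ind ((QS 𝓑 𝓜 S ∩ HS A r).Nonempty))
              • del d A.card r := by
          rw [Finset.sum_comm]
          apply Finset.sum_congr rfl
          intro A _
          rw [Finset.sum_comm]
          apply Finset.sum_congr rfl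
          intro r _
          rw [Finset.sum_smul]
      _ = 0 := by
          apply Finset.sum_eq_zero
          intro A _
          apply Finset.sum_eq_zero
          intro r _
          rw [heuler A r, zero_smul]
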